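/- Let R be a commutative ring with finitely many minimal primes, and x a parameter sequence on R. Then ht((x)R) ≥ ℓ(x), the length of the sequence. -/

import Mathlib

/-- The natural map between localizations of a module at powers of two elements
`a ∣ b`, sending `m/1` to `m/1`. -/

noncomputable def cechLoc {R : Type*} [CommRing R] {M : Type*} [AddCommGroup M] [Module R M]
    (a b : R) (hab : a ∣ b) :
    LocalizedModule (Submonoid.powers a) M →ₗ[R] LocalizedModule (Submonoid.powers b) M :=
  LocalizedModule.lift _ (LocalizedModule.mkLinearMap (Submonoid.powers b) M) (by
    rintro ⟨s, n, rfl⟩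
    obtain ⟨c, rfl⟩ := hab
    set f := algebraMap R (Module.End R (LocalizedModule (Submonoid.powers (a * c)) M)) with hf
    obtain ⟨u, hu⟩ := IsLocalizedModule.map_units
      (LocalizedModule.mkLinearMap (Submonoid.powers (a * c)) M)
      (⟨(a * c) ^ n, n, rfl⟩ : Submonoid.powers (a * c))
    have hcomm : Commute (f (a ^ n)) ↑u := by
      have : Commute (f (a ^ n)) (f ((a * c) ^ n)) := by
        simp only [Commute, SemiconjBy, ← map_mul, mul_comm]
      rwa [← hu] at this
    refine ⟨⟨f (a ^ n), f (c ^ n) * ↑u⁻¹, ?_, ?_⟩, rfl⟩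
    · rw [← mul_assoc, ← map_mul, ← mul_pow, ← hu]
      exact u.mul_inv
    · rw [mul_assoc, ← (hcomm.units_inv_right).eq, ← mul_assoc, ← map_mul]
      have : c ^ n * a ^ n = (a * c) ^ n := by ring
      rw [this, ← hu]
      exact u.mul_inv)

open scoped BigOperators
open Classical

noncomputable section

variable {R : Type*} [CommRing R]

/-- Degree `i` term of the Čech complex of the sequence `x` with coefficients in `M`:
the product over `i`-element subsets `t` of the index set of the localization of `M`
at the product of the `x j` for `j ∈ t`. -/
noncomputable abbrev CechC {ℓ : ℕ} (x : Fin ℓ → R) (M : Type*) [AddCommGroup M] [Module R M]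
    (i : ℕ) : Type _ :=
  ∀ t : {t : Finset (Fin ℓ) // t.card = i}, LocalizedModule (Submonoid.powers (∏ j ∈ t.1, x j)) M

/-- The Čech differential `C^i → C^{i+1}`: the alternating sum of the further-localization
maps. -/
noncomputable def cechD {ℓ : ℕ} (x : Fin ℓ → R) (M : Type*) [AddCommGroup M] [Module R M]
    (i : ℕ) : CechC x M i →ₗ[R] CechC x M (i + 1) where
  toFun m t := ∑ j ∈ (t.1).attach,
    ((-1 : ℤ) ^ ((t.1.filter (· < j.1)).card)) •
      cechLoc (∏ k ∈ t.1.erase j.1, x k) (∏ k ∈ t.1, x k)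
        (Finset.prod_dvd_prod_of_subset _ _ _ (Finset.erase_subset _ _))
        (m ⟨t.1.erase j.1, by rw [Finset.card_erase_of_mem j.2, t.2]; omega⟩)
  map_add' := by
    intro a b
    funext t
    simp [Pi.add_apply, map_add, smul_add, Finset.sum_add_distrib]
    rw [← Finset.sum_add_distrib]
    refine Finset.sum_congr rfl (fun _ _ => ?_)
    first
      | exact zsmul_add _ _ _
      | exact smul_add (M := ℤ) _ _ _
      | erw [smul_add]
  map_smul' := by
    intro r a
    funext t
    simp [Pi.smul_apply, map_smul, Finset.smul_sum, smul_comm r]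

/-- The submodule of Čech coboundaries in degree `i`. -/
noncomputable def cechPrevRange {ℓ : ℕ} (x : Fin ℓ → R) (M : Type*) [AddCommGroup M]
    [Module R M] : (i : ℕ) → Submodule R (CechC x M i)
  | 0 => ⊥
  | (i + 1) => LinearMap.range (cechD x M i)

/-- The `i`-th Čech cohomology of `M` with respect to the sequence `x`:
cocycles modulo coboundaries. -/
noncomputable abbrev CechH {ℓ : ℕ} (x : Fin ℓ → R) (M : Type*) [AddCommGroup M] [Module R M]
    (i : ℕ) : Type _ :=
  LinearMap.ker (cechD x M i) ⧸
    (cechPrevRange x M i).comap (LinearMap.ker (cechD x M i)).subtype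


/-- Degree `i` term of the Koszul complex on `ℓ` elements: free module indexed by
`i`-element subsets of the index set. -/
abbrev KoszulC (R : Type*) [CommRing R] (ℓ i : ℕ) : Type _ :=
  {t : Finset (Fin ℓ) // t.card = i} → R

/-- The Koszul differential `K_{i+1} → K_i` for the sequence `x^k = x_1^k, ..., x_ℓ^k`. -/
noncomputable def koszulD {ℓ : ℕ} (x : Fin ℓ → R) (k : ℕ) (i : ℕ) :
    KoszulC R ℓ (i + 1) →ₗ[R] KoszulC R ℓ i where
  toFun m s := ∑ j ∈ (s.1ᶜ).attach,
    ((-1 : ℤ) ^ ((s.1.filter (· < j.1)).card)) •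
      ((x j.1 ^ k) * m ⟨insert j.1 s.1, by
        rw [Finset.card_insert_of_notMem (Finset.mem_compl.mp j.2), s.2]⟩)
  map_add' := by
    intro a b
    funext s
    simp [mul_add, smul_add, Finset.sum_add_distrib]
  map_smul' := by
    intro r a
    funext s
    simp [Finset.mul_sum, mul_smul_comm, mul_left_comm]
  
/-- The standard transition chain map `K(x^m) → K(x^n)` (for `n ≤ m`) in degree `i`:
multiplication on the component indexed by `t` by `∏_{j ∈ t} x_j^{m-n}`. -/
noncomputable def koszulTr {ℓ : ℕ} (x : Fin ℓ → R) (m n i : ℕ) :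
    KoszulC R ℓ i →ₗ[R] KoszulC R ℓ i where
  toFun z t := (∏ j ∈ t.1, x j ^ (m - n)) * z t
  map_add' := by intro a b; funext t; simp [mul_add]
  map_smul' := by intro r a; funext t; simp; ring

/-- A finite sequence `x` is weakly proregular if for each `n` there is `m ≥ n` such that
the transition maps `H_i(x^m; R) → H_i(x^n; R)` on Koszul homology vanish for all `i ≥ 1`;
equivalently, the transition image of every cycle is a boundary. -/
def WeaklyProregular {ℓ : ℕ} (x : Fin ℓ → R) : Prop :=
  ∀ n : ℕ, 1 ≤ n → ∃ m, n ≤ m ∧ ∀ i : ℕ, ∀ z : KoszulC R ℓ (i + 1),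
    koszulD x m i z = 0 →
      ∃ b : KoszulC R ℓ (i + 1 + 1), koszulD x n (i + 1) b = koszulTr x m n (i + 1) z

/-- The height of an ideal: the infimum of the heights of the primes containing it. -/
noncomputable def idealHeight (I : Ideal R) : ℕ∞ :=
  ⨅ p : {p : PrimeSpectrum R // I ≤ p.asIdeal}, Order.height p.1


/-- A finite sequence `x` (given as a list `l`) is a parameter sequence on `R` if it is
weakly proregular, generates a proper ideal, and the localized top Čech cohomology
`H^{ℓ(x)}_x(R)_p` is nonzero for every prime `p` containing `(x)R`. -/
def IsParamSeq (l : List R) : Prop :=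
  WeaklyProregular l.get ∧ Ideal.span {a | a ∈ l} ≠ ⊤ ∧
    ∀ p : PrimeSpectrum R, Ideal.span {a | a ∈ l} ≤ p.asIdeal →
      Nontrivial (LocalizedModule p.asIdeal.primeCompl (CechH l.get R l.length))

/-- A strong parameter sequence: every initial segment is a parameter sequence. -/
def IsStrongParamSeq (l : List R) : Prop :=
  ∀ i : ℕ, i ≤ l.length → IsParamSeq (l.take i)


universe u

/-- The "boundary" multiplicative monoid of an element. -/
def auxBMonoid {A : Type*} [CommRing A] (x : A) : Submonoid A where
  carrier := {y | ∃ m a, y = x ^ m * (1 + a * x)}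
  one_mem' := ⟨0, 0, by ring⟩
  mul_mem' := by
    rintro y z ⟨m, a, rfl⟩ ⟨m', a', rfl⟩
    exact ⟨m + m', a + a' + a * a' * x, by ring⟩

lemma auxPullback {R A : Type*} [CommRing R] [CommRing A] [Algebra R A] (S : Submonoid R)
    [IsLocalization S A] {z : R} {I : Ideal R}
    (h : algebraMap R A z ∈ Ideal.map (algebraMap R A) I) : ∃ s ∈ S, s * z ∈ I := by
  rw [IsLocalization.mem_map_algebraMap_iff S] at h
  obtain ⟨⟨i, s⟩, hs⟩ := h
  rw [← map_mul] at hs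
  obtain ⟨c, hc⟩ := (IsLocalization.eq_iff_exists S A).mp hs
  refine ⟨c * s, mul_mem c.2 s.2, ?_⟩
  have : (c : R) * (z * s) ∈ I := by rw [hc]; exact I.mul_mem_left _ i.2
  simpa [mul_comm, mul_left_comm, mul_assoc] using this

lemma auxComapStrictMono {R A : Type*} [CommRing R] [CommRing A] [Algebra R A] (S : Submonoid R)
    [IsLocalization S A] : StrictMono (PrimeSpectrum.comap (algebraMap R A)) := by
  intro a b hab
  refine lt_of_le_of_ne ?_ fun e => hab.ne (PrimeSpectrum.localization_comap_injective A S e)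
  rw [← PrimeSpectrum.asIdeal_le_asIdeal]
  simp only [PrimeSpectrum.comap_asIdeal]
  exact Ideal.comap_mono ((PrimeSpectrum.asIdeal_le_asIdeal _ _).mpr hab.le)

lemma auxComapDisjoint {R A : Type*} [CommRing R] [CommRing A] [Algebra R A] (S : Submonoid R)
    [IsLocalization S A] (q : PrimeSpectrum A) {y : R} (hy : y ∈ S) :
    y ∉ (PrimeSpectrum.comap (algebraMap R A) q).asIdeal := by
  intro h
  rw [PrimeSpectrum.comap_asIdeal, Ideal.mem_comap] at h
  exact q.isPrime.ne_top (q.asIdeal.eq_top_of_isUnit_mem h (IsLocalization.map_units A ⟨y, hy⟩))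

lemma auxCL (n : ℕ) : ∀ (A : Type u) [CommRing A],
    (∀ l : LTSeries (PrimeSpectrum A), l.length < n) → ∀ x : Fin n → A,
    ∃ T, (∏ i, x i) ^ T ∈ Ideal.span (Set.range fun i => x i ^ (T + 1)) := by
  induction n with
  | zero =>
    intro A _ hb x
    have hsub : Subsingleton A := by
      by_contra hns
      have : Nontrivial A := not_subsingleton_iff_nontrivial.mp hns
      have : Nonempty (PrimeSpectrum A) := inferInstance
      exact absurd (hb (RelSeries.singleton _ this.some)) (by simp)
    exact ⟨0, by rw [Subsingleton.elim ((∏ i, x i) ^ 0) 0]; exact Ideal.zero_mem _⟩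
  | succ n ih =>
    intro A _ hb x
    set xl := x (Fin.last n) with hxl
    set S := auxBMonoid xl with hS
    have hxlS : xl ∈ S := ⟨1, 0, by ring⟩
    have hbloc : ∀ l : LTSeries (PrimeSpectrum (Localization S)), l.length < n := by
      intro l
      by_contra hlen
      push_neg at hlen
      set l' := l.map _ (auxComapStrictMono S (A := Localization S)) with hl'
      set q := l'.last with hq
      have hqdisj : ∀ y ∈ S, y ∉ q.asIdeal := by
        intro y hy
        have : q = PrimeSpectrum.comap (algebraMap A (Localization S)) l.last := by
          rw [hq, hl']; simp
        rw [this]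
        exact auxComapDisjoint S l.last hy
      have hne : q.asIdeal ⊔ Ideal.span {xl} ≠ ⊤ := by
        intro htop
        have h1 : (1 : A) ∈ q.asIdeal ⊔ Ideal.span {xl} := htop ▸ Submodule.mem_top
        obtain ⟨t, ht, z, hz, h1⟩ := Submodule.mem_sup.mp h1
        obtain ⟨a, rfl⟩ := Ideal.mem_span_singleton'.mp hz
        have : t ∈ S := ⟨0, -a, by linear_combination h1⟩
        exact hqdisj t this ht
      obtain ⟨Q, hQmax, hQ⟩ := Ideal.exists_le_maximal _ hne
      have hxlQ : xl ∈ Q := hQ (le_sup_right (a := q.asIdeal) (Ideal.mem_span_singleton_self xl))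
      have hlt : q < ⟨Q, hQmax.isPrime⟩ := by
        refine lt_of_le_of_ne ?_ fun e => ?_
        · rw [← PrimeSpectrum.asIdeal_le_asIdeal]
          exact le_trans le_sup_left hQ
        · exact hqdisj xl hxlS (by rw [e]; exact hxlQ)
      have := hb (l'.snoc _ hlt)
      simp only [RelSeries.snoc_length] at this
      have hlen' : l'.length = l.length := rfl
      omega
    obtain ⟨T, hT⟩ := ih (Localization S) hbloc
      (fun i => algebraMap A (Localization S) (x i.castSucc))
    have h2 : algebraMap A (Localization S) ((∏ i : Fin n, x i.castSucc) ^ T) ∈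
        Ideal.map (algebraMap A (Localization S))
          (Ideal.span (Set.range fun i : Fin n => x i.castSucc ^ (T + 1))) := by
      rw [Ideal.map_span, ← Set.range_comp]
      have : ((fun z => algebraMap A (Localization S) z) ∘ fun i : Fin n => x i.castSucc ^ (T + 1))
          = fun i : Fin n => (algebraMap A (Localization S) (x i.castSucc)) ^ (T + 1) := by
        funext i; simp [map_pow]
      rw [this]
      simpa [map_prod, map_pow] using hT
    obtain ⟨s, hsS, hs⟩ := auxPullback S h2
    obtain ⟨mm, a, rfl⟩ := hsS
    refine ⟨T + mm, ?_⟩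
    set Pn := ∏ i : Fin n, x i.castSucc with hPn
    set J := Ideal.span (Set.range fun i : Fin (n + 1) => x i ^ (T + mm + 1)) with hJ
    have key : ∀ w ∈ Ideal.span (Set.range fun i : Fin n => x i.castSucc ^ (T + 1)),
        xl ^ T * Pn ^ mm * w ∈ J := by
      intro w hw
      have : Ideal.span (Set.range fun i : Fin n => x i.castSucc ^ (T + 1)) ≤
          Submodule.comap (LinearMap.lsmul A A (xl ^ T * Pn ^ mm)) J := by
        rw [Ideal.span_le]
        rintro y ⟨j, rfl⟩
        simp only [Submodule.mem_comap, LinearMap.lsmul_apply, smul_eq_mul, SetLike.mem_coe]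
        have h1 : x j.castSucc ^ mm ∣ Pn ^ mm :=
          pow_dvd_pow_of_dvd (Finset.dvd_prod_of_mem _ (Finset.mem_univ j)) mm
        have h2 : x j.castSucc ^ (T + mm + 1) ∣ xl ^ T * Pn ^ mm * x j.castSucc ^ (T + 1) := by
          obtain ⟨t, ht⟩ := h1
          exact ⟨xl ^ T * t, by rw [ht]; ring⟩
        obtain ⟨t, ht⟩ := h2
        rw [ht]
        exact J.mul_mem_right t (Ideal.subset_span ⟨j.castSucc, rfl⟩)
      simpa using this hw
    have hmain := key _ hs
    have hterm2 : xl ^ (T + mm + 1) * (a * Pn ^ (T + mm)) ∈ J :=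
      J.mul_mem_right _ (Ideal.subset_span ⟨Fin.last n, rfl⟩)
    have hEq : (∏ i : Fin (n + 1), x i) ^ (T + mm)
        = xl ^ T * Pn ^ mm * (xl ^ mm * (1 + a * xl) * Pn ^ T)
          - xl ^ (T + mm + 1) * (a * Pn ^ (T + mm)) := by
      rw [Fin.prod_univ_castSucc x, ← hPn, ← hxl]; ring
    rw [hEq]
    exact J.sub_mem hmain hterm2

lemma auxCLP {R : Type*} [CommRing R] (p : PrimeSpectrum R) {n : ℕ}
    (hn : Order.height p < (n : ℕ∞)) (x : Fin n → R) (k : ℕ) :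
    ∃ s ∉ p.asIdeal, ∃ T, s * (∏ i, x i) ^ T ∈
      Ideal.span (Set.range fun i => x i ^ (T + k)) := by
  set A := Localization.AtPrime p.asIdeal with hA
  have hbnd : ∀ l : LTSeries (PrimeSpectrum A), l.length < n := by
    intro l
    set l' := l.map _ (auxComapStrictMono p.asIdeal.primeCompl (A := A)) with hl'
    have hle : l'.last ≤ p := by
      rw [← PrimeSpectrum.asIdeal_le_asIdeal]
      intro y hy
      by_contra hyp
      exact auxComapDisjoint p.asIdeal.primeCompl l.last hyp (by simpa [hl'] using hy)
    have h1 : (l.length : ℕ∞) ≤ Order.height p := by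
      have := Order.length_le_height hle
      exact this
    exact_mod_cast lt_of_le_of_lt h1 hn
  obtain ⟨T, hT⟩ := auxCL n A hbnd (fun i => algebraMap R A (x i ^ k))
  have h2 : algebraMap R A ((∏ i, x i ^ k) ^ T) ∈
      Ideal.map (algebraMap R A) (Ideal.span (Set.range fun i => (x i ^ k) ^ (T + 1))) := by
    rw [Ideal.map_span, ← Set.range_comp]
    have : ((fun z => algebraMap R A z) ∘ fun i => (x i ^ k) ^ (T + 1))
        = fun i => (algebraMap R A (x i ^ k)) ^ (T + 1) := by
      funext i; simp [map_pow]
    rw [this]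
    simpa [map_prod, map_pow] using hT
  obtain ⟨s, hsS, hs⟩ := auxPullback p.asIdeal.primeCompl h2
  refine ⟨s, hsS, k * T, ?_⟩
  have e1 : (∏ i, x i ^ k) ^ T = (∏ i, x i) ^ (k * T) := by
    rw [Finset.prod_pow, ← pow_mul]
  have e2 : (fun i => (x i ^ k) ^ (T + 1)) = fun i => x i ^ (k * T + k) := by
    funext i; rw [← pow_mul]; ring_nf
  rw [e1, e2] at hs
  exact hs

lemma auxMkAdd {R M : Type*} [CommRing R] [AddCommGroup M] [Module R M] {S : Submonoid R}
    (s : S) (a b : M) :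
    LocalizedModule.mk a s + LocalizedModule.mk b s = LocalizedModule.mk (a + b) s := by
  rw [LocalizedModule.mk_add_mk]
  refine LocalizedModule.mk_eq.mpr ⟨1, ?_⟩
  simp [smul_add, mul_smul]

lemma auxMkSum {R M ι : Type*} [CommRing R] [AddCommGroup M] [Module R M] {S : Submonoid R}
    (s : S) (F : Finset ι) (f : ι → M) :
    ∑ j ∈ F, LocalizedModule.mk (f j) s = LocalizedModule.mk (∑ j ∈ F, f j) s := by
  classical
  induction F using Finset.cons_induction with
  | empty => simp [LocalizedModule.zero_mk]
  | cons j F hj ih => rw [Finset.sum_cons, Finset.sum_cons, ih, auxMkAdd]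

lemma auxCechLocMk {R : Type*} [CommRing R] {M : Type*} [AddCommGroup M] [Module R M]
    (a b c : R) (hb : b = a * c) (hab : a ∣ b) (N : ℕ) (mm : M) :
    cechLoc a b hab (LocalizedModule.mk mm (⟨a ^ N, ⟨N, rfl⟩⟩ : Submonoid.powers a))
      = LocalizedModule.mk (c ^ N • mm) (⟨b ^ N, ⟨N, rfl⟩⟩ : Submonoid.powers b) := by
  have hu : IsUnit ((algebraMap R (Module.End R (LocalizedModule (Submonoid.powers b) M))) (b ^ N)) :=
    IsLocalizedModule.map_units (LocalizedModule.mkLinearMap (Submonoid.powers b) M)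
      (⟨b ^ N, ⟨N, rfl⟩⟩ : Submonoid.powers b)
  have hbij : Function.Bijective
      ((algebraMap R (Module.End R (LocalizedModule (Submonoid.powers b) M))) (b ^ N)) :=
    (Module.End.isUnit_iff _).mp hu
  have hinj : Function.Injective
      (fun z : LocalizedModule (Submonoid.powers b) M => a ^ N • z) := by
    intro u v huv
    apply hbij.injective
    show (b ^ N) • u = (b ^ N) • v
    have hbc : (b : R) ^ N = c ^ N * a ^ N := by rw [hb]; ring
    rw [hbc, mul_smul, mul_smul]
    simpa using congrArg (fun z => c ^ N • z) huv
  apply hinj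
  show a ^ N • cechLoc a b hab (LocalizedModule.mk mm (⟨a ^ N, ⟨N, rfl⟩⟩ : Submonoid.powers a))
      = a ^ N • LocalizedModule.mk (c ^ N • mm) (⟨b ^ N, ⟨N, rfl⟩⟩ : Submonoid.powers b)
  rw [← map_smul, LocalizedModule.smul'_mk]
  have h1 : LocalizedModule.mk (a ^ N • mm) (⟨a ^ N, ⟨N, rfl⟩⟩ : Submonoid.powers a)
      = LocalizedModule.mk mm 1 := by
    have := LocalizedModule.mk_cancel (S := Submonoid.powers a)
      (⟨a ^ N, ⟨N, rfl⟩⟩ : Submonoid.powers a) mm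
    simpa [Submonoid.smul_def] using this
  rw [h1]
  have h2 : cechLoc a b hab (LocalizedModule.mk mm 1) = LocalizedModule.mk mm 1 := by
    unfold cechLoc
    rw [LocalizedModule.lift_mk]
    erw [Module.End.algebraMap_isUnit_inv_apply_eq_iff]
    simp
  rw [h2, LocalizedModule.smul'_mk]
  have h3 : a ^ N • c ^ N • mm = ((⟨b ^ N, ⟨N, rfl⟩⟩ : Submonoid.powers b) : R) • mm := by
    rw [smul_smul]
    show (a ^ N * c ^ N) • mm = b ^ N • mm
    rw [← mul_pow, ← hb]
  rw [h3]
  have := LocalizedModule.mk_cancel (S := Submonoid.powers b)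
    (⟨b ^ N, ⟨N, rfl⟩⟩ : Submonoid.powers b) mm
  simpa [Submonoid.smul_def] using this.symm

set_option synthInstance.maxHeartbeats 1000000 in
set_option maxHeartbeats 4000000 in
lemma auxCechKey {R : Type*} [CommRing R] {n : ℕ} (hn : 1 ≤ n) (x : Fin n → R)
    (p : PrimeSpectrum R) (hp : Order.height p < (n : ℕ∞)) :
    Subsingleton (LocalizedModule p.asIdeal.primeCompl (CechH x R n)) := by
  obtain ⟨m, rfl⟩ : ∃ m, n = m + 1 := ⟨n - 1, by omega⟩
  have main : ∀ ξ : LinearMap.ker (cechD x R (m + 1)), ∃ s : p.asIdeal.primeCompl,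
      (s : R) • ξ.1 ∈ LinearMap.range (cechD x R m) := by
    intro ξ
    have hu2 : (Finset.univ : Finset (Fin (m + 1))).card = m + 1 := by simp
    have huniq : ∀ t : {t : Finset (Fin (m + 1)) // t.card = m + 1},
        t = ⟨Finset.univ, hu2⟩ := fun t =>
      Subtype.ext (Finset.eq_univ_of_card _ (by rw [t.2]; simp))
    have hrep : ∀ z : LocalizedModule (Submonoid.powers (∏ j ∈ Finset.univ, x j)) R,
        ∃ r kk, z = LocalizedModule.mk r
          (⟨(∏ j ∈ Finset.univ, x j) ^ kk, ⟨kk, rfl⟩⟩ :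
            Submonoid.powers (∏ j ∈ Finset.univ, x j)) := by
      intro z
      induction z using LocalizedModule.induction_on with
      | h a b =>
        obtain ⟨kk, hkk⟩ := (Submonoid.mem_powers_iff _ _).mp b.2
        exact ⟨a, kk, by
          rw [show (⟨(∏ j ∈ Finset.univ, x j) ^ kk, ⟨kk, rfl⟩⟩ :
            Submonoid.powers (∏ j ∈ Finset.univ, x j)) = b from Subtype.ext hkk]⟩
    obtain ⟨r, kk, hrk⟩ := hrep (ξ.1 ⟨Finset.univ, hu2⟩)
    obtain ⟨s, hsp, T, hmem⟩ := auxCLP p hp x kk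
    obtain ⟨c, hc⟩ := (Submodule.mem_span_range_iff_exists_fun R).mp hmem
    have hcne : ∀ t : {t : Finset (Fin (m + 1)) // t.card = m}, (t.1ᶜ).Nonempty := by
      intro t
      rw [← Finset.card_pos, Finset.card_compl, t.2]
      simp
    have hecard : ∀ j : Fin (m + 1), ((Finset.univ : Finset (Fin (m+1))).erase j).card = m := by
      intro j
      rw [Finset.card_erase_of_mem (Finset.mem_univ _)]
      simp
    have hjj : ∀ (j : Fin (m + 1)) (h : ((Finset.univ : Finset (Fin (m+1))).erase j).card = m),
        ((Finset.univ.erase j)ᶜ).min' (hcne ⟨Finset.univ.erase j, h⟩) = j := by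
      intro j h
      have hcj : ((Finset.univ.erase j)ᶜ : Finset (Fin (m + 1))) = {j} := by
        rw [Finset.compl_erase]
        simp
      simp [hcj]
    refine ⟨⟨s, hsp⟩, (fun t =>
      ((-1 : ℤ) ^ ((Finset.univ.filter (· < (t.1ᶜ).min' (hcne t))).card)) •
        LocalizedModule.mk (r * c ((t.1ᶜ).min' (hcne t)))
          (⟨(∏ a ∈ t.1, x a) ^ (T + kk), ⟨T + kk, rfl⟩⟩ :
            Submonoid.powers (∏ a ∈ t.1, x a)) : CechC x R m), ?_⟩
    funext t
    rw [huniq t]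
    show (cechD x R m) _ ⟨Finset.univ, hu2⟩ = ((s : R) • ξ.1) ⟨Finset.univ, hu2⟩
    rw [Pi.smul_apply, hrk, LocalizedModule.smul'_mk]
    simp only [cechD, LinearMap.coe_mk, AddHom.coe_mk]
    have hstep : ∀ j : {a : Fin (m + 1) // a ∈ (Finset.univ : Finset (Fin (m + 1)))},
        ((-1 : ℤ) ^ ((Finset.univ.filter (· < j.1)).card)) •
          (cechLoc (∏ k2 ∈ Finset.univ.erase j.1, x k2) (∏ k2 ∈ Finset.univ, x k2)
            (Finset.prod_dvd_prod_of_subset _ _ _ (Finset.erase_subset _ _))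
            (((-1 : ℤ) ^ ((Finset.univ.filter
                  (· < ((Finset.univ.erase j.1)ᶜ.min'
                    (hcne ⟨Finset.univ.erase j.1, hecard j.1⟩)))).card)) •
              LocalizedModule.mk (r * c ((Finset.univ.erase j.1)ᶜ.min'
                    (hcne ⟨Finset.univ.erase j.1, hecard j.1⟩)))
                (⟨(∏ a ∈ Finset.univ.erase j.1, x a) ^ (T + kk), ⟨T + kk, rfl⟩⟩ :
                  Submonoid.powers (∏ a ∈ Finset.univ.erase j.1, x a))))
        = LocalizedModule.mk ((x j.1) ^ (T + kk) • (r * c j.1))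
            (⟨(∏ j2 ∈ Finset.univ, x j2) ^ (T + kk), ⟨T + kk, rfl⟩⟩ :
              Submonoid.powers (∏ j2 ∈ Finset.univ, x j2)) := by
      intro j
      rw [hjj j.1 (hecard j.1)]
      rw [map_zsmul, smul_smul, ← pow_add, Even.neg_one_pow (Even.add_self _), one_smul]
      exact auxCechLocMk _ _ _ ((Finset.prod_erase_mul _ _ (Finset.mem_univ j.1)).symm) _ _ _
    rw [Finset.sum_congr rfl (fun j _ => hstep j), auxMkSum,
      Finset.sum_attach Finset.univ (fun j => (x j) ^ (T + kk) • (r * c j))]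
    refine LocalizedModule.mk_eq.mpr ⟨1, ?_⟩
    simp only [one_smul, Submonoid.smul_def, smul_eq_mul]
    have hsum : ∑ j ∈ Finset.univ, x j ^ (T + kk) * (r * c j)
        = r * (s * (∏ i, x i) ^ T) := by
      have h4 : ∑ j ∈ Finset.univ, x j ^ (T + kk) * (r * c j)
          = r * ∑ j ∈ Finset.univ, c j • x j ^ (T + kk) := by
        rw [Finset.mul_sum]
        exact Finset.sum_congr rfl fun i _ => by simp only [smul_eq_mul]; ring
      rw [h4, hc]
    rw [hsum, pow_add]
    ring
  refine ⟨fun y z => ?_⟩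
  have hzero : ∀ w : LocalizedModule p.asIdeal.primeCompl (CechH x R (m + 1)), w = 0 := by
    intro w
    induction w using LocalizedModule.induction_on with
    | h q uu =>
      obtain ⟨ξ, rfl⟩ := Submodule.Quotient.mk_surjective _ q
      obtain ⟨s, hs⟩ := main ξ
      have hsq : (s : R) • (Submodule.Quotient.mk ξ : CechH x R (m + 1)) = 0 := by
        rw [← Submodule.Quotient.mk_smul, Submodule.Quotient.mk_eq_zero]
        refine Submodule.mem_comap.mpr ?_
        show ((s : R) • ξ : LinearMap.ker (cechD x R (m + 1))).1 ∈ cechPrevRange x R (m + 1)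
        simpa [cechPrevRange] using hs
      rw [← LocalizedModule.zero_mk (1 : p.asIdeal.primeCompl)]
      refine LocalizedModule.mk_eq.mpr ⟨s, ?_⟩
      rw [one_smul, smul_zero, smul_zero]
      exact hsq
  rw [hzero y, hzero z]

set_option synthInstance.maxHeartbeats 1000000 in
set_option maxHeartbeats 4000000 in
/-- If `R` has finitely many minimal primes and `x` is a parameter sequence on `R`, then
`ht((x)R) ≥ ℓ(x)`. -/
theorem stmt_10 {R : Type*} [CommRing R] (hmin : (minimalPrimes R).Finite)
    (l : List R) (hl : IsParamSeq l) :
    (l.length : ℕ∞) ≤ idealHeight (Ideal.span {a | a ∈ l}) := by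
  rw [idealHeight]
  refine le_iInf fun q => ?_
  by_contra hcon
  push_neg at hcon
  have hn1 : 1 ≤ l.length := by
    rcases Nat.eq_zero_or_pos l.length with h | h
    · rw [h] at hcon; simp at hcon
    · exact h
  exact (not_subsingleton_iff_nontrivial.mpr (hl.2.2 q.1 q.2))
    (auxCechKey hn1 l.get q.1 hcon)

end
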